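/- For fixed 0 < α < 1, the function γ ↦ ln((1-γ)/α) / ln((1-α)/γ) is monotonically increasing on the set {γ : 0 < γ < 1, γ ≠ 1-α}. -/

import Mathlib

open Real Set

private lemma log_ge_aux (x : ℝ) (hx : 0 < x) : 1 - x⁻¹ ≤ Real.log x := by
  have h := Real.log_le_sub_one_of_pos (inv_pos.mpr hx)
  rw [Real.log_inv] at h
  linarith

private lemma gibbs_aux (p q : ℝ) (hp0 : 0 < p) (hp1 : p < 1) (hq0 : 0 < q) (hq1 : q < 1) :
    0 ≤ p * Real.log (p / q) + (1 - p) * Real.log ((1 - p) / (1 - q)) := by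
  have hp1' : (0:ℝ) < 1 - p := by linarith
  have hq1' : (0:ℝ) < 1 - q := by linarith
  have hpne : p ≠ 0 := hp0.ne'
  have hp1ne : (1:ℝ) - p ≠ 0 := hp1'.ne'
  have h1 : 1 - (p / q)⁻¹ ≤ Real.log (p / q) := log_ge_aux _ (div_pos hp0 hq0)
  have h2 : 1 - ((1 - p) / (1 - q))⁻¹ ≤ Real.log ((1 - p) / (1 - q)) :=
    log_ge_aux _ (div_pos hp1' hq1')
  rw [inv_div] at h1 h2
  have e1 : p * (1 - q / p) = p - q := by field_simp
  have e2 : (1 - p) * (1 - (1 - q) / (1 - p)) = q - p := by field_simp; ring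
  have h3 : p * (1 - q / p) ≤ p * Real.log (p / q) :=
    mul_le_mul_of_nonneg_left h1 hp0.le
  have h4 : (1 - p) * (1 - (1 - q) / (1 - p)) ≤ (1 - p) * Real.log ((1 - p) / (1 - q)) :=
    mul_le_mul_of_nonneg_left h2 hp1'.le
  linarith [e1 ▸ h3, e2 ▸ h4]

private lemma log_v_ne (α γ : ℝ) (hα0 : 0 < α) (hα1 : α < 1) (hγ0 : 0 < γ)
    (hne : γ ≠ 1 - α) : Real.log ((1 - α) / γ) ≠ 0 := by
  have h1α : (0:ℝ) < 1 - α := by linarith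
  intro h
  rcases (Real.log_eq_zero).mp h with h1 | h1 | h1
  · have : (0:ℝ) < (1 - α) / γ := div_pos h1α hγ0
    linarith
  · have : 1 - α = γ := by
      field_simp at h1; linarith
    exact hne this.symm
  · have : (0:ℝ) < (1 - α) / γ := div_pos h1α hγ0
    linarith

private lemma mono_aux (α a b : ℝ) (hα0 : 0 < α) (hα1 : α < 1) (h0 : 0 ≤ a) (hb : b ≤ 1)
    (hne : ∀ x ∈ Set.Ioo a b, x ≠ 1 - α) :
    MonotoneOn (fun γ => Real.log ((1 - γ) / α) / Real.log ((1 - α) / γ)) (Set.Ioo a b) := by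
  have h1α : (0:ℝ) < 1 - α := by linarith
  have hderiv : ∀ x ∈ Set.Ioo a b,
      HasDerivAt (fun γ => Real.log ((1 - γ) / α) / Real.log ((1 - α) / γ))
        (((-(1 - x)⁻¹) * Real.log ((1 - α) / x) -
          Real.log ((1 - x) / α) * (-x⁻¹)) / (Real.log ((1 - α) / x)) ^ 2) x := by
    intro x hx
    have hx0 : 0 < x := lt_of_le_of_lt h0 hx.1
    have hx1 : x < 1 := lt_of_lt_of_le hx.2 hb
    have hx1' : (0:ℝ) < 1 - x := by linarith
    have hxne : x ≠ 0 := hx0.ne'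
    have hx1ne : (1:ℝ) - x ≠ 0 := hx1'.ne'
    have hane : α ≠ 0 := hα0.ne'
    have h1ane : (1:ℝ) - α ≠ 0 := h1α.ne'
    have hvne : Real.log ((1 - α) / x) ≠ 0 := log_v_ne α x hα0 hα1 hx0 (hne x hx)
    have hu : HasDerivAt (fun γ : ℝ => Real.log ((1 - γ) / α)) (-(1 - x)⁻¹) x := by
      have h1 : HasDerivAt (fun γ : ℝ => (1 - γ) / α) (-1 / α) x :=
        ((hasDerivAt_id x).const_sub 1).div_const α
      have h2 := h1.log (ne_of_gt (div_pos hx1' hα0))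
      convert h2 using 1
      field_simp
    have hv : HasDerivAt (fun γ : ℝ => Real.log ((1 - α) / γ)) (-x⁻¹) x := by
      have h1 : HasDerivAt (fun γ : ℝ => (1 - α) / γ) ((1 - α) * (-(x ^ 2)⁻¹)) x := by
        simpa [div_eq_mul_inv] using (hasDerivAt_inv (ne_of_gt hx0)).const_mul (1 - α)
      have h2 := h1.log (ne_of_gt (div_pos h1α hx0))
      convert h2 using 1
      field_simp
    exact hu.div hv hvne
  apply monotoneOn_of_deriv_nonneg (convex_Ioo a b)
  · exact fun x hx => ((hderiv x hx).differentiableAt).continuousAt.continuousWithinAt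
  · intro x hx
    rw [interior_Ioo] at hx
    exact (hderiv x hx).differentiableAt.differentiableWithinAt
  · intro x hx
    rw [interior_Ioo] at hx
    rw [(hderiv x hx).deriv]
    have hx0 : 0 < x := lt_of_le_of_lt h0 hx.1
    have hx1 : x < 1 := lt_of_lt_of_le hx.2 hb
    have hx1' : (0:ℝ) < 1 - x := by linarith
    set u := Real.log ((1 - x) / α) with hu
    set v := Real.log ((1 - α) / x) with hv
    have hg := gibbs_aux x (1 - α) hx0 hx1 (by linarith) (by linarith)
    have hlog : Real.log (x / (1 - α)) = -v := by
      rw [hv, ← Real.log_inv, inv_div]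
    rw [hlog] at hg
    have hg' : 0 ≤ x * (-v) + (1 - x) * u := by
      have e : (1 : ℝ) - (1 - α) = α := by ring
      rw [e] at hg
      exact hg
    have hnum : 0 ≤ (-(1 - x)⁻¹) * v - u * (-x⁻¹) := by
      have key : 0 ≤ (1 - x) * u - x * v := by linarith
      have e : (-(1 - x)⁻¹) * v - u * (-x⁻¹) = ((1 - x) * u - x * v) / (x * (1 - x)) := by
        field_simp
        ring
      rw [e]
      exact div_nonneg key (by positivity)
    exact div_nonneg hnum (sq_nonneg _)

theorem K_alpha_mono_in_gamma (α : ℝ) (hα0 : 0 < α) (hα1 : α < 1) :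
    ∀ γ₁ γ₂ : ℝ, 0 < γ₁ → γ₁ < 1 → γ₁ ≠ 1 - α → 0 < γ₂ → γ₂ < 1 → γ₂ ≠ 1 - α →
      γ₁ < γ₂ →
      Real.log ((1 - γ₁) / α) / Real.log ((1 - α) / γ₁) ≤
        Real.log ((1 - γ₂) / α) / Real.log ((1 - α) / γ₂) := by
  intro γ₁ γ₂ h10 h11 h1ne h20 h21 h2ne h12
  have hα1' : (0:ℝ) < 1 - α := by linarith
  rcases lt_or_gt_of_ne h2ne with hc2 | hc2
  · have h1lt : γ₁ < 1 - α := lt_trans h12 hc2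
    exact mono_aux α 0 (1 - α) hα0 hα1 le_rfl (by linarith)
      (fun x hx => ne_of_lt hx.2) ⟨h10, h1lt⟩ ⟨h20, hc2⟩ h12.le
  · rcases lt_or_gt_of_ne h1ne with hc1 | hc1
    · have hv1pos : 0 < Real.log ((1 - α) / γ₁) :=
        Real.log_pos (by rw [lt_div_iff₀ h10]; linarith)
      have hv2neg : Real.log ((1 - α) / γ₂) < 0 :=
        Real.log_neg (div_pos hα1' h20) (by rw [div_lt_one h20]; linarith)
      have key : ∀ γ : ℝ, 0 < γ → γ < 1 →
          α * Real.log ((1 - γ) / α) ≤ (1 - α) * Real.log ((1 - α) / γ) := by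
        intro γ hg0 hg1
        have hg := gibbs_aux (1 - α) γ hα1' (by linarith) hg0 hg1
        have e1 : (1:ℝ) - (1 - α) = α := by ring
        rw [e1] at hg
        have e2 : Real.log (α / (1 - γ)) = -Real.log ((1 - γ) / α) := by
          rw [← Real.log_inv, inv_div]
        rw [e2] at hg
        linarith
      have hb1 : Real.log ((1 - γ₁) / α) / Real.log ((1 - α) / γ₁) ≤ (1 - α) / α := by
        rw [div_le_div_iff₀ hv1pos hα0]
        have := key γ₁ h10 h11
        linarith
      have hb2 : (1 - α) / α ≤ Real.log ((1 - γ₂) / α) / Real.log ((1 - α) / γ₂) := by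
        rw [le_div_iff_of_neg hv2neg]
        have h := key γ₂ h20 h21
        rw [div_mul_eq_mul_div, le_div_iff₀ hα0]
        linarith
      linarith
    · exact mono_aux α (1 - α) 1 hα0 hα1 (by linarith) le_rfl
        (fun x hx => (ne_of_gt hx.1)) ⟨hc1, h11⟩ ⟨lt_trans hc1 h12, h21⟩ h12.le
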